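/- Let p and l be distinct odd primes. The group Γ = ψ(Γ̃) is a CSA-group: every maximal abelian subgroup Γ₀ of Γ is malnormal, i.e. for every g ∈ Γ with g ∉ Γ₀ one has gΓ₀g⁻¹ ∩ Γ₀ = {1}. -/

import Mathlib

open Quaternion Matrix
open scoped Classical

noncomputable section

/-- The set `Γ̃` of integer quaternions with norm `p^r l^s` and the appropriate
parity conditions. -/
def GammaTilde (p l : ℕ) : Set ℍ[ℤ] :=
  {x | (∃ r s : ℕ, Quaternion.normSq x = (p : ℤ) ^ r * (l : ℤ) ^ s) ∧
       (Quaternion.normSq x % 4 = 1 →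
          Odd x.re ∧ Even x.imI ∧ Even x.imJ ∧ Even x.imK) ∧
       (Quaternion.normSq x % 4 = 3 →
          Even x.imI ∧ Odd x.re ∧ Odd x.imJ ∧ Odd x.imK)}

/-- The set `Ã ⊆ Γ̃` of elements of positive real part and norm `p`. -/
def Atilde (p l : ℕ) : Set ℍ[ℤ] :=
  {x | x ∈ GammaTilde p l ∧ 0 < x.re ∧ Quaternion.normSq x = (p : ℤ)}

/-- The set `B̃ ⊆ Γ̃` of elements of positive real part and norm `l`. -/
def Btilde (p l : ℕ) : Set ℍ[ℤ] :=
  {y | y ∈ GammaTilde p l ∧ 0 < y.re ∧ Quaternion.normSq y = (l : ℤ)}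

/-- The projective general linear group `PGL₂(K)`: `GL₂(K)` modulo its center. -/
abbrev PGL2 (K : Type*) [Field K] : Type _ :=
  GL (Fin 2) K ⧸ Subgroup.center (GL (Fin 2) K)

/-- The matrix `M_{c,d}(x)` associated to an integer quaternion `x`. -/
def Mcd {K : Type*} [Field K] (c d : K) (x : ℍ[ℤ]) : Matrix (Fin 2) (Fin 2) K :=
  !![(x.re : K) + (x.imI : K) * c + (x.imK : K) * d,
     -(x.imI : K) * d + (x.imJ : K) + (x.imK : K) * c;
     -(x.imI : K) * d - (x.imJ : K) + (x.imK : K) * c,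
     (x.re : K) - (x.imI : K) * c - (x.imK : K) * d]

lemma det_Mcd {K : Type*} [Field K] {c d : K} (hcd : c ^ 2 + d ^ 2 + 1 = 0)
    (x : ℍ[ℤ]) : (Mcd c d x).det = ((Quaternion.normSq x : ℤ) : K) := by
  rw [Quaternion.normSq_def']
  rw [Mcd, Matrix.det_fin_two_of]
  push_cast
  linear_combination (-(x.imI : K) ^ 2 - (x.imK : K) ^ 2) * hcd

lemma det_Mcd_ne_zero {K : Type*} [Field K] [CharZero K] {c d : K}
    (hcd : c ^ 2 + d ^ 2 + 1 = 0) {x : ℍ[ℤ]} (hx : x ≠ 0) :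
    (Mcd c d x).det ≠ 0 := by
  rw [det_Mcd hcd]
  exact_mod_cast Quaternion.normSq_ne_zero.mpr hx

/-- The image of a nonzero integer quaternion in `GL₂(K)` (junk value `1` at `x = 0`). -/
def psiGL {K : Type*} [Field K] [CharZero K] (c d : K) (hcd : c ^ 2 + d ^ 2 + 1 = 0)
    (x : ℍ[ℤ]) : GL (Fin 2) K :=
  if hx : x = 0 then 1
  else Matrix.GeneralLinearGroup.mkOfDetNeZero (Mcd c d x) (det_Mcd_ne_zero hcd hx)

variable (p l : ℕ) [Fact p.Prime] [Fact l.Prime]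

/-- The map `ψ : ℍ(ℤ) → PGL₂(ℚ_p) × PGL₂(ℚ_l)` (with junk value at `0`). -/
def psi (cp dp : ℚ_[p]) (cl dl : ℚ_[l])
    (hp : cp ^ 2 + dp ^ 2 + 1 = 0) (hl : cl ^ 2 + dl ^ 2 + 1 = 0)
    (x : ℍ[ℤ]) : PGL2 ℚ_[p] × PGL2 ℚ_[l] :=
  (QuotientGroup.mk (psiGL cp dp hp x), QuotientGroup.mk (psiGL cl dl hl x))

/-- The group `Γ = ψ(Γ̃)`, as the subgroup of `PGL₂(ℚ_p) × PGL₂(ℚ_l)` generated by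
the image `ψ(Γ̃)` (this image is itself closed under multiplication and inverses,
so it coincides with the generated subgroup). -/
def Gamma (cp dp : ℚ_[p]) (cl dl : ℚ_[l])
    (hp : cp ^ 2 + dp ^ 2 + 1 = 0) (hl : cl ^ 2 + dl ^ 2 + 1 = 0) :
    Subgroup (PGL2 ℚ_[p] × PGL2 ℚ_[l]) :=
  Subgroup.closure (psi p l cp dp cl dl hp hl '' GammaTilde p l)

/-- The subgroup `Γ_p = ⟨ψ(Ã)⟩`. -/
def GammaP (cp dp : ℚ_[p]) (cl dl : ℚ_[l])
    (hp : cp ^ 2 + dp ^ 2 + 1 = 0) (hl : cl ^ 2 + dl ^ 2 + 1 = 0) :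
    Subgroup (PGL2 ℚ_[p] × PGL2 ℚ_[l]) :=
  Subgroup.closure (psi p l cp dp cl dl hp hl '' Atilde p l)

/-- The subgroup `Γ_l = ⟨ψ(B̃)⟩`. -/
def GammaL (cp dp : ℚ_[p]) (cl dl : ℚ_[l])
    (hp : cp ^ 2 + dp ^ 2 + 1 = 0) (hl : cl ^ 2 + dl ^ 2 + 1 = 0) :
    Subgroup (PGL2 ℚ_[p] × PGL2 ℚ_[l]) :=
  Subgroup.closure (psi p l cp dp cl dl hp hl '' Btilde p l)

/-- `Γ₀` is a maximal abelian subgroup of `Γ`: it is an abelian subgroup contained in `Γ`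
which is maximal among abelian subgroups of `Γ` ordered by inclusion. -/
def IsMaxAbelian {G : Type*} [Group G] (Γ Γ₀ : Subgroup G) : Prop :=
  Γ₀ ≤ Γ ∧ (∀ a ∈ Γ₀, ∀ b ∈ Γ₀, a * b = b * a) ∧
    ∀ H : Subgroup G, H ≤ Γ → (∀ a ∈ H, ∀ b ∈ H, a * b = b * a) → Γ₀ ≤ H → H = Γ₀


section McdLemmas
variable {K : Type*} [Field K]

lemma Mcd_entries (c d : K) (x : ℍ[ℤ]) :
    Mcd c d x 0 0 = (x.re : K) + (x.imI : K) * c + (x.imK : K) * d ∧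
    Mcd c d x 0 1 = -(x.imI : K) * d + (x.imJ : K) + (x.imK : K) * c ∧
    Mcd c d x 1 0 = -(x.imI : K) * d - (x.imJ : K) + (x.imK : K) * c ∧
    Mcd c d x 1 1 = (x.re : K) - (x.imI : K) * c - (x.imK : K) * d := by
  refine ⟨?_, ?_, ?_, ?_⟩ <;> simp [Mcd]

lemma Mcd_map_one (c d : K) : Mcd c d (1 : ℍ[ℤ]) = 1 := by
  ext i j
  fin_cases i <;> fin_cases j <;>
    simp [Mcd, Quaternion.re_one, Quaternion.imI_one, Quaternion.imJ_one, Quaternion.imK_one,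
      Matrix.one_apply]

lemma Mcd_map_mul {c d : K} (hcd : c ^ 2 + d ^ 2 + 1 = 0) (x y : ℍ[ℤ]) :
    Mcd c d (x * y) = Mcd c d x * Mcd c d y := by
  have ex := Mcd_entries c d x
  have ey := Mcd_entries c d y
  have exy := Mcd_entries c d (x * y)
  refine Matrix.ext ?_
  simp only [Fin.forall_fin_two, Matrix.mul_apply, Fin.sum_univ_two]
  refine ⟨⟨?_, ?_⟩, ?_, ?_⟩
  · rw [exy.1, ex.1, ey.1, ex.2.1, ey.2.2.1]
    simp only [Quaternion.re_mul, Quaternion.imI_mul, Quaternion.imJ_mul, Quaternion.imK_mul]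
    push_cast
    linear_combination (-((x.imI:K)*(y.imI:K) + (x.imK:K)*(y.imK:K))) * hcd
  · rw [exy.2.1, ex.1, ey.2.1, ex.2.1, ey.2.2.2]
    simp only [Quaternion.re_mul, Quaternion.imI_mul, Quaternion.imJ_mul, Quaternion.imK_mul]
    push_cast
    linear_combination (-((x.imI:K)*(y.imK:K) - (x.imK:K)*(y.imI:K))) * hcd
  · rw [exy.2.2.1, ex.2.2.1, ey.1, ex.2.2.2, ey.2.2.1]
    simp only [Quaternion.re_mul, Quaternion.imI_mul, Quaternion.imJ_mul, Quaternion.imK_mul]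
    push_cast
    linear_combination (-((x.imK:K)*(y.imI:K) - (x.imI:K)*(y.imK:K))) * hcd
  · rw [exy.2.2.2, ex.2.2.1, ey.2.1, ex.2.2.2, ey.2.2.2]
    simp only [Quaternion.re_mul, Quaternion.imI_mul, Quaternion.imJ_mul, Quaternion.imK_mul]
    push_cast
    linear_combination (-((x.imI:K)*(y.imI:K) + (x.imK:K)*(y.imK:K))) * hcd

lemma Mcd_map_neg (c d : K) (x : ℍ[ℤ]) : Mcd c d (-x) = -Mcd c d x := by
  ext i j
  fin_cases i <;> fin_cases j <;>
    · simp [Mcd]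
      push_cast
      ring

lemma Mcd_coe (c d : K) (n : ℤ) : Mcd c d ((n : ℍ[ℤ])) = (n : K) • (1 : Matrix (Fin 2) (Fin 2) K) := by
  ext i j
  fin_cases i <;> fin_cases j <;>
    simp [Mcd, Matrix.one_apply, Quaternion.re_coe, Quaternion.imI_coe, Quaternion.imJ_coe,
      Quaternion.imK_coe]

lemma Mcd_inj [CharZero K] {c d : K} (hcd : c ^ 2 + d ^ 2 + 1 = 0) {x y : ℍ[ℤ]}
    (h : Mcd c d x = Mcd c d y) : x = y := by
  have ex := Mcd_entries c d x
  have ey := Mcd_entries c d y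
  have h00 : Mcd c d x 0 0 = Mcd c d y 0 0 := by rw [h]
  have h01 : Mcd c d x 0 1 = Mcd c d y 0 1 := by rw [h]
  have h10 : Mcd c d x 1 0 = Mcd c d y 1 0 := by rw [h]
  have h11 : Mcd c d x 1 1 = Mcd c d y 1 1 := by rw [h]
  rw [ex.1, ey.1] at h00
  rw [ex.2.1, ey.2.1] at h01
  rw [ex.2.2.1, ey.2.2.1] at h10
  rw [ex.2.2.2, ey.2.2.2] at h11
  have hre : (x.re : K) = y.re := by linear_combination (h00 + h11) / 2
  have hJ : (x.imJ : K) = y.imJ := by linear_combination (h01 - h10) / 2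
  have hI : (x.imI : K) = y.imI := by
    linear_combination (-c/2) * h00 + (c/2) * h11 + (d/2) * h01 + (d/2) * h10
      + ((x.imI:K) - (y.imI:K)) * hcd
  have hK : (x.imK : K) = y.imK := by
    linear_combination (-d/2) * h00 + (d/2) * h11 + (-c/2) * h01 + (-c/2) * h10
      + ((x.imK:K) - (y.imK:K)) * hcd
  ext
  · exact_mod_cast hre
  · exact_mod_cast hI
  · exact_mod_cast hJ
  · exact_mod_cast hK

end McdLemmas

section PGLLemmas
variable {K : Type*} [Field K]

lemma psiGL_val [CharZero K] {c d : K} (hcd : c ^ 2 + d ^ 2 + 1 = 0) {x : ℍ[ℤ]} (hx : x ≠ 0) :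
    (psiGL c d hcd x : Matrix (Fin 2) (Fin 2) K) = Mcd c d x := by
  rw [psiGL, dif_neg hx]
  rfl

lemma pgl_mk_eq_of_smul {a b : GL (Fin 2) K} {μ : K} (hμ : μ ≠ 0)
    (h : (b : Matrix (Fin 2) (Fin 2) K) = μ • (a : Matrix (Fin 2) (Fin 2) K)) :
    (QuotientGroup.mk a : PGL2 K) = QuotientGroup.mk b := by
  rw [QuotientGroup.eq]
  have hab : ((a⁻¹ * b : GL (Fin 2) K) : Matrix (Fin 2) (Fin 2) K)
      = μ • (1 : Matrix (Fin 2) (Fin 2) K) := by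
    rw [Units.val_mul, h, Matrix.mul_smul, ← Units.val_mul, inv_mul_cancel, Units.val_one]
  rw [Subgroup.mem_center_iff]
  intro g
  apply Units.ext
  rw [Units.val_mul g _, Units.val_mul _ g, hab, Matrix.mul_smul, Matrix.smul_mul, mul_one, one_mul]

lemma pgl_mk_eq_imp {a b : GL (Fin 2) K}
    (h : (QuotientGroup.mk a : PGL2 K) = QuotientGroup.mk b) :
    ∃ μ : K, μ ≠ 0 ∧ (b : Matrix (Fin 2) (Fin 2) K) = μ • (a : Matrix (Fin 2) (Fin 2) K) := by
  rw [QuotientGroup.eq] at h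
  set Z := ((a⁻¹ * b : GL (Fin 2) K) : Matrix (Fin 2) (Fin 2) K) with hZ
  have hdetE : (!![1, 1; 0, 1] : Matrix (Fin 2) (Fin 2) K).det ≠ 0 := by
    simp [Matrix.det_fin_two_of]
  have hdetF : (!![1, 0; 1, 1] : Matrix (Fin 2) (Fin 2) K).det ≠ 0 := by
    simp [Matrix.det_fin_two_of]
  set E : GL (Fin 2) K := Matrix.GeneralLinearGroup.mkOfDetNeZero _ hdetE with hE
  set F : GL (Fin 2) K := Matrix.GeneralLinearGroup.mkOfDetNeZero _ hdetF with hF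
  have hEc : (E : Matrix (Fin 2) (Fin 2) K) * Z = Z * (E : Matrix (Fin 2) (Fin 2) K) := by
    have := Subgroup.mem_center_iff.mp h E
    calc (E : Matrix (Fin 2) (Fin 2) K) * Z = ((E * (a⁻¹ * b) : GL (Fin 2) K) : Matrix (Fin 2) (Fin 2) K) := rfl
    _ = (((a⁻¹ * b) * E : GL (Fin 2) K) : Matrix (Fin 2) (Fin 2) K) := by rw [this]
    _ = Z * (E : Matrix (Fin 2) (Fin 2) K) := rfl
  have hFc : (F : Matrix (Fin 2) (Fin 2) K) * Z = Z * (F : Matrix (Fin 2) (Fin 2) K) := by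
    have := Subgroup.mem_center_iff.mp h F
    calc (F : Matrix (Fin 2) (Fin 2) K) * Z = ((F * (a⁻¹ * b) : GL (Fin 2) K) : Matrix (Fin 2) (Fin 2) K) := rfl
    _ = (((a⁻¹ * b) * F : GL (Fin 2) K) : Matrix (Fin 2) (Fin 2) K) := by rw [this]
    _ = Z * (F : Matrix (Fin 2) (Fin 2) K) := rfl
  have hEv : (E : Matrix (Fin 2) (Fin 2) K) = !![1, 1; 0, 1] := rfl
  have hFv : (F : Matrix (Fin 2) (Fin 2) K) = !![1, 0; 1, 1] := rfl
  rw [hEv] at hEc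
  rw [hFv] at hFc
  have e00 := congrFun (congrFun hEc 0) 0
  have e01 := congrFun (congrFun hEc 0) 1
  have f00 := congrFun (congrFun hFc 0) 0
  simp only [Matrix.mul_apply, Fin.sum_univ_two, Matrix.cons_val', Matrix.cons_val_zero,
    Matrix.cons_val_one, Matrix.head_cons, Matrix.empty_val', Matrix.cons_val_fin_one,
    Matrix.head_fin_const, Matrix.of_apply, one_mul, mul_one, zero_mul, mul_zero,
    add_zero, zero_add] at e00 e01 f00
  have h10 : Z 1 0 = 0 := by linear_combination e00
  have h01 : Z 0 1 = 0 := left_eq_add.mp f00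
  have h11 : Z 1 1 = Z 0 0 := by linear_combination e01
  have hZsc : Z = Z 0 0 • (1 : Matrix (Fin 2) (Fin 2) K) := by
    refine Matrix.ext ?_
    simp only [Fin.forall_fin_two]
    refine ⟨⟨?_, ?_⟩, ?_, ?_⟩ <;>
      simp [Matrix.one_apply, Matrix.smul_apply, smul_eq_mul, h10, h01, h11]
  have hdet : Z.det ≠ 0 := by
    have : Z * ((b⁻¹ * a : GL (Fin 2) K) : Matrix (Fin 2) (Fin 2) K) = 1 := by
      rw [hZ, ← Units.val_mul]
      have hgr : (a⁻¹ * b) * (b⁻¹ * a) = 1 := by group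
      rw [hgr, Units.val_one]
    intro h0
    have := congrArg Matrix.det this
    rw [Matrix.det_mul, h0, zero_mul, Matrix.det_one] at this
    exact zero_ne_one this
  have hμ : Z 0 0 ≠ 0 := by
    intro h0
    rw [hZsc, h0, zero_smul] at hdet
    simp at hdet
  refine ⟨Z 0 0, hμ, ?_⟩
  have hba : b = a * (a⁻¹ * b) := by group
  calc (b : Matrix (Fin 2) (Fin 2) K) = ((a * (a⁻¹ * b) : GL (Fin 2) K) : Matrix (Fin 2) (Fin 2) K) := by rw [← hba]
  _ = (a : Matrix (Fin 2) (Fin 2) K) * Z := rfl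
  _ = (a : Matrix (Fin 2) (Fin 2) K) * (Z 0 0 • 1) := by rw [← hZsc]
  _ = Z 0 0 • (a : Matrix (Fin 2) (Fin 2) K) := by rw [Matrix.mul_smul, mul_one]

end PGLLemmas

section ParityLemmas

/-- Pattern A: the parity pattern of norm ≡ 1 mod 4. -/
def PatA (x : ℍ[ℤ]) : Prop := Odd x.re ∧ Even x.imI ∧ Even x.imJ ∧ Even x.imK

/-- Pattern B: the parity pattern of norm ≡ 3 mod 4. -/
def PatB (x : ℍ[ℤ]) : Prop := Even x.imI ∧ Odd x.re ∧ Odd x.imJ ∧ Odd x.imK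

lemma odd_sq_mod4 {a : ℤ} (h : Odd a) : a ^ 2 % 4 = 1 := by
  obtain ⟨k, rfl⟩ := h
  have : (2 * k + 1) ^ 2 = 1 + (k * (k + 1)) * 4 := by ring
  rw [this, Int.add_mul_emod_self_right]
  norm_num

lemma even_sq_mod4 {a : ℤ} (h : Even a) : a ^ 2 % 4 = 0 := by
  obtain ⟨k, rfl⟩ := h
  have : (k + k) ^ 2 = 0 + (k * k) * 4 := by ring
  rw [this, Int.add_mul_emod_self_right]
  norm_num

lemma mod4_sum1 {a b c d : ℤ} (ha : a % 4 = 1) (hb : b % 4 = 0) (hc : c % 4 = 0)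
    (hd : d % 4 = 0) : (a + b + c + d) % 4 = 1 := by omega

lemma mod4_sum3 {a b c d : ℤ} (ha : a % 4 = 1) (hb : b % 4 = 0) (hc : c % 4 = 1)
    (hd : d % 4 = 1) : (a + b + c + d) % 4 = 3 := by omega

lemma normSq_mod4_of_patA {x : ℍ[ℤ]} (h : PatA x) : Quaternion.normSq x % 4 = 1 := by
  rw [Quaternion.normSq_def']
  exact mod4_sum1 (odd_sq_mod4 h.1) (even_sq_mod4 h.2.1) (even_sq_mod4 h.2.2.1)
    (even_sq_mod4 h.2.2.2)

lemma normSq_mod4_of_patB {x : ℍ[ℤ]} (h : PatB x) : Quaternion.normSq x % 4 = 3 := by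
  rw [Quaternion.normSq_def']
  exact mod4_sum3 (odd_sq_mod4 h.2.1) (even_sq_mod4 h.1) (odd_sq_mod4 h.2.2.1)
    (odd_sq_mod4 h.2.2.2)

lemma int_even_cast2 {a : ℤ} : Even a ↔ (a : ZMod 2) = 0 := by
  rw [ZMod.intCast_zmod_eq_zero_iff_dvd, even_iff_two_dvd]
  norm_num

lemma int_odd_cast2 {a : ℤ} : Odd a ↔ (a : ZMod 2) = 1 := by
  rw [← Int.not_even_iff_odd, int_even_cast2]
  have : ∀ z : ZMod 2, z ≠ 0 ↔ z = 1 := by decide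
  exact this _

/-- membership in `GammaTilde` via patterns. -/
lemma gammaTilde_mem_iff {p l : ℕ} (hp : Odd p) (hl : Odd l) {x : ℍ[ℤ]} :
    x ∈ GammaTilde p l ↔
      (∃ r s : ℕ, Quaternion.normSq x = (p : ℤ) ^ r * (l : ℤ) ^ s) ∧ (PatA x ∨ PatB x) := by
  constructor
  · rintro ⟨⟨r, s, hrs⟩, h1, h3⟩
    refine ⟨⟨r, s, hrs⟩, ?_⟩
    have hodd : Odd (Quaternion.normSq x) := by
      rw [hrs]
      exact ((Int.odd_coe_nat p).mpr hp |>.pow).mul ((Int.odd_coe_nat l).mpr hl |>.pow)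
    obtain ⟨k, hk⟩ := hodd
    have : Quaternion.normSq x % 4 = 1 ∨ Quaternion.normSq x % 4 = 3 := by omega
    rcases this with h | h
    · exact Or.inl (h1 h)
    · exact Or.inr (h3 h)
  · rintro ⟨hrs, hAB⟩
    rcases hAB with hA | hB
    · refine ⟨hrs, fun _ => hA, fun h3 => absurd h3 ?_⟩
      simp [normSq_mod4_of_patA hA]
    · refine ⟨hrs, fun h1 => absurd h1 ?_, fun _ => hB⟩
      simp [normSq_mod4_of_patB hB]

lemma gammaTilde_odd_re {p l : ℕ} (hp : Odd p) (hl : Odd l) {x : ℍ[ℤ]}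
    (hx : x ∈ GammaTilde p l) : Odd x.re := by
  rcases (gammaTilde_mem_iff hp hl).mp hx with ⟨_, hA | hB⟩
  · exact hA.1
  · exact hB.2.1

lemma gammaTilde_re_ne_zero {p l : ℕ} (hp : Odd p) (hl : Odd l) {x : ℍ[ℤ]}
    (hx : x ∈ GammaTilde p l) : x.re ≠ 0 := by
  have := gammaTilde_odd_re hp hl hx
  rcases this with ⟨k, hk⟩
  omega

lemma gammaTilde_ne_zero {p l : ℕ} (hp : Odd p) (hl : Odd l) {x : ℍ[ℤ]}
    (hx : x ∈ GammaTilde p l) : x ≠ 0 := by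
  intro h
  exact gammaTilde_re_ne_zero hp hl hx (by rw [h]; rfl)

lemma pat_mul {x y : ℍ[ℤ]} (hx : PatA x ∨ PatB x) (hy : PatA y ∨ PatB y) :
    PatA (x * y) ∨ PatB (x * y) := by
  have hre := Quaternion.re_mul x y
  have hI := Quaternion.imI_mul x y
  have hJ := Quaternion.imJ_mul x y
  have hK := Quaternion.imK_mul x y
  rcases hx with hx | hx <;> rcases hy with hy | hy
  · left
    have a0 := int_odd_cast2.mp hx.1
    have a1 := int_even_cast2.mp hx.2.1
    have a2 := int_even_cast2.mp hx.2.2.1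
    have a3 := int_even_cast2.mp hx.2.2.2
    have b0 := int_odd_cast2.mp hy.1
    have b1 := int_even_cast2.mp hy.2.1
    have b2 := int_even_cast2.mp hy.2.2.1
    have b3 := int_even_cast2.mp hy.2.2.2
    refine ⟨?_, ?_, ?_, ?_⟩
    · rw [int_odd_cast2, hre]
      push_cast
      rw [a0, a1, a2, a3, b0, b1, b2, b3]
      decide
    · rw [int_even_cast2, hI]
      push_cast
      rw [a0, a1, a2, a3, b0, b1, b2, b3]
      decide
    · rw [int_even_cast2, hJ]
      push_cast
      rw [a0, a1, a2, a3, b0, b1, b2, b3]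
      decide
    · rw [int_even_cast2, hK]
      push_cast
      rw [a0, a1, a2, a3, b0, b1, b2, b3]
      decide
  · right
    have a0 := int_odd_cast2.mp hx.1
    have a1 := int_even_cast2.mp hx.2.1
    have a2 := int_even_cast2.mp hx.2.2.1
    have a3 := int_even_cast2.mp hx.2.2.2
    have b1 := int_even_cast2.mp hy.1
    have b0 := int_odd_cast2.mp hy.2.1
    have b2 := int_odd_cast2.mp hy.2.2.1
    have b3 := int_odd_cast2.mp hy.2.2.2
    refine ⟨?_, ?_, ?_, ?_⟩
    · rw [int_even_cast2, hI]
      push_cast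
      rw [a0, a1, a2, a3, b0, b1, b2, b3]
      decide
    · rw [int_odd_cast2, hre]
      push_cast
      rw [a0, a1, a2, a3, b0, b1, b2, b3]
      decide
    · rw [int_odd_cast2, hJ]
      push_cast
      rw [a0, a1, a2, a3, b0, b1, b2, b3]
      decide
    · rw [int_odd_cast2, hK]
      push_cast
      rw [a0, a1, a2, a3, b0, b1, b2, b3]
      decide
  · right
    have a1 := int_even_cast2.mp hx.1
    have a0 := int_odd_cast2.mp hx.2.1
    have a2 := int_odd_cast2.mp hx.2.2.1
    have a3 := int_odd_cast2.mp hx.2.2.2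
    have b0 := int_odd_cast2.mp hy.1
    have b1 := int_even_cast2.mp hy.2.1
    have b2 := int_even_cast2.mp hy.2.2.1
    have b3 := int_even_cast2.mp hy.2.2.2
    refine ⟨?_, ?_, ?_, ?_⟩
    · rw [int_even_cast2, hI]
      push_cast
      rw [a0, a1, a2, a3, b0, b1, b2, b3]
      decide
    · rw [int_odd_cast2, hre]
      push_cast
      rw [a0, a1, a2, a3, b0, b1, b2, b3]
      decide
    · rw [int_odd_cast2, hJ]
      push_cast
      rw [a0, a1, a2, a3, b0, b1, b2, b3]
      decide
    · rw [int_odd_cast2, hK]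
      push_cast
      rw [a0, a1, a2, a3, b0, b1, b2, b3]
      decide
  · left
    have a1 := int_even_cast2.mp hx.1
    have a0 := int_odd_cast2.mp hx.2.1
    have a2 := int_odd_cast2.mp hx.2.2.1
    have a3 := int_odd_cast2.mp hx.2.2.2
    have b1 := int_even_cast2.mp hy.1
    have b0 := int_odd_cast2.mp hy.2.1
    have b2 := int_odd_cast2.mp hy.2.2.1
    have b3 := int_odd_cast2.mp hy.2.2.2
    refine ⟨?_, ?_, ?_, ?_⟩
    · rw [int_odd_cast2, hre]
      push_cast
      rw [a0, a1, a2, a3, b0, b1, b2, b3]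
      decide
    · rw [int_even_cast2, hI]
      push_cast
      rw [a0, a1, a2, a3, b0, b1, b2, b3]
      decide
    · rw [int_even_cast2, hJ]
      push_cast
      rw [a0, a1, a2, a3, b0, b1, b2, b3]
      decide
    · rw [int_even_cast2, hK]
      push_cast
      rw [a0, a1, a2, a3, b0, b1, b2, b3]
      decide

end ParityLemmas

section GammaTildeClosure

lemma gammaTilde_one_mem {p l : ℕ} (hp : Odd p) (hl : Odd l) : (1 : ℍ[ℤ]) ∈ GammaTilde p l := by
  rw [gammaTilde_mem_iff hp hl]
  refine ⟨⟨0, 0, by simp⟩, Or.inl ⟨?_, ?_, ?_, ?_⟩⟩ <;> simp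

lemma gammaTilde_mul_mem {p l : ℕ} (hp : Odd p) (hl : Odd l) {x y : ℍ[ℤ]}
    (hx : x ∈ GammaTilde p l) (hy : y ∈ GammaTilde p l) : x * y ∈ GammaTilde p l := by
  rw [gammaTilde_mem_iff hp hl] at hx hy ⊢
  obtain ⟨⟨r, s, hrs⟩, hxp⟩ := hx
  obtain ⟨⟨r', s', hrs'⟩, hyp⟩ := hy
  refine ⟨⟨r + r', s + s', ?_⟩, pat_mul hxp hyp⟩
  rw [show Quaternion.normSq (x * y) = Quaternion.normSq x * Quaternion.normSq y from
    _root_.map_mul Quaternion.normSq x y, hrs, hrs']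
  ring

lemma gammaTilde_star_mem {p l : ℕ} (hp : Odd p) (hl : Odd l) {x : ℍ[ℤ]}
    (hx : x ∈ GammaTilde p l) : star x ∈ GammaTilde p l := by
  rw [gammaTilde_mem_iff hp hl] at hx ⊢
  obtain ⟨⟨r, s, hrs⟩, hxp⟩ := hx
  refine ⟨⟨r, s, by rwa [Quaternion.normSq_star]⟩, ?_⟩
  rcases hxp with h | h
  · exact Or.inl ⟨by simpa using h.1, by simpa using h.2.1, by simpa using h.2.2.1,
      by simpa using h.2.2.2⟩
  · exact Or.inr ⟨by simpa using h.1, by simpa using h.2.1, (by simpa using h.2.2.1 : Odd x.imJ).neg,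
      (by simpa using h.2.2.2 : Odd x.imK).neg⟩

end GammaTildeClosure

section QuatLemmas

lemma quat_anticomm_eq_zero {x y : ℍ[ℤ]} (hx : x.re ≠ 0) (h : x * y = -(y * x)) : y = 0 := by
  have e0 : (x * y).re = (-(y * x)).re := by rw [h]
  have e1 : (x * y).imI = (-(y * x)).imI := by rw [h]
  have e2 : (x * y).imJ = (-(y * x)).imJ := by rw [h]
  have e3 : (x * y).imK = (-(y * x)).imK := by rw [h]
  simp only [Quaternion.re_mul, Quaternion.imI_mul, Quaternion.imJ_mul, Quaternion.imK_mul,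
    Quaternion.re_neg, Quaternion.imI_neg, Quaternion.imJ_neg, Quaternion.imK_neg] at e0 e1 e2 e3
  have key2 : 2 * (y.re * (x.re ^ 2 + x.imI ^ 2 + x.imJ ^ 2 + x.imK ^ 2)) = 0 := by
    linear_combination x.re * e0 + x.imI * e1 + x.imJ * e2 + x.imK * e3
  have key : y.re * (x.re ^ 2 + x.imI ^ 2 + x.imJ ^ 2 + x.imK ^ 2) = 0 := by linarith
  have hpos : 0 < x.re ^ 2 + x.imI ^ 2 + x.imJ ^ 2 + x.imK ^ 2 := by positivity
  have hy0 : y.re = 0 := by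
    rcases mul_eq_zero.mp key with h' | h'
    · exact h'
    · exact absurd h' (ne_of_gt hpos)
  have h1 : x.re * y.imI = 0 := by
    have : 2 * (x.re * y.imI) = 0 := by linear_combination e1 - 2 * x.imI * hy0
    linarith
  have h2 : x.re * y.imJ = 0 := by
    have : 2 * (x.re * y.imJ) = 0 := by linear_combination e2 - 2 * x.imJ * hy0
    linarith
  have h3 : x.re * y.imK = 0 := by
    have : 2 * (x.re * y.imK) = 0 := by linear_combination e3 - 2 * x.imK * hy0
    linarith
  ext
  · exact hy0
  · exact (mul_eq_zero.mp h1).resolve_left hx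
  · exact (mul_eq_zero.mp h2).resolve_left hx
  · exact (mul_eq_zero.mp h3).resolve_left hx

lemma quat_comm_iff_cross {x y : ℍ[ℤ]} :
    x * y = y * x ↔ (x.imJ * y.imK - x.imK * y.imJ = 0 ∧ x.imK * y.imI - x.imI * y.imK = 0 ∧
      x.imI * y.imJ - x.imJ * y.imI = 0) := by
  constructor
  · intro h
    have hI := congrArg QuaternionAlgebra.imI h
    have hJ := congrArg QuaternionAlgebra.imJ h
    have hK := congrArg QuaternionAlgebra.imK h
    simp only [Quaternion.imI_mul, Quaternion.imJ_mul, Quaternion.imK_mul] at hI hJ hK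
    refine ⟨?_, ?_, ?_⟩
    · have : 2 * (x.imJ * y.imK - x.imK * y.imJ) = 0 := by linear_combination hI
      linarith
    · have : 2 * (x.imK * y.imI - x.imI * y.imK) = 0 := by linear_combination hJ
      linarith
    · have : 2 * (x.imI * y.imJ - x.imJ * y.imI) = 0 := by linear_combination hK
      linarith
  · rintro ⟨h1, h2, h3⟩
    ext
    · simp only [Quaternion.re_mul]; ring
    · simp only [Quaternion.imI_mul]; linear_combination 2 * h1
    · simp only [Quaternion.imJ_mul]; linear_combination 2 * h2
    · simp only [Quaternion.imK_mul]; linear_combination 2 * h3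

lemma cross_trans {a1 a2 a3 b1 b2 b3 c1 c2 c3 : ℤ} (hb : ¬(b1 = 0 ∧ b2 = 0 ∧ b3 = 0))
    (h1 : a2 * b3 - a3 * b2 = 0) (h2 : a3 * b1 - a1 * b3 = 0) (h3 : a1 * b2 - a2 * b1 = 0)
    (k1 : b2 * c3 - b3 * c2 = 0) (k2 : b3 * c1 - b1 * c3 = 0) (k3 : b1 * c2 - b2 * c1 = 0) :
    a2 * c3 - a3 * c2 = 0 ∧ a3 * c1 - a1 * c3 = 0 ∧ a1 * c2 - a2 * c1 = 0 := by
  have hS : b1 ^ 2 + b2 ^ 2 + b3 ^ 2 ≠ 0 := by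
    intro h0
    exact hb ⟨by nlinarith [sq_nonneg b1, sq_nonneg b2, sq_nonneg b3],
      by nlinarith [sq_nonneg b1, sq_nonneg b2, sq_nonneg b3],
      by nlinarith [sq_nonneg b1, sq_nonneg b2, sq_nonneg b3]⟩
  refine ⟨?_, ?_, ?_⟩
  · have key : (b1 ^ 2 + b2 ^ 2 + b3 ^ 2) * (a2 * c3 - a3 * c2) = 0 := by
      linear_combination (-b1 * c3) * h3 + (b1 * a1 + b2 * a2 + b3 * a3) * k1 + (-b1 * c2) * h2
        + (b2 * c2 + b3 * c3) * h1
    exact (mul_eq_zero.mp key).resolve_left hS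
  · have key : (b1 ^ 2 + b2 ^ 2 + b3 ^ 2) * (a3 * c1 - a1 * c3) = 0 := by
      linear_combination (-b2 * c1) * h1 + (b1 * a1 + b2 * a2 + b3 * a3) * k2 + (-b2 * c3) * h3
        + (b3 * c3 + b1 * c1) * h2
    exact (mul_eq_zero.mp key).resolve_left hS
  · have key : (b1 ^ 2 + b2 ^ 2 + b3 ^ 2) * (a1 * c2 - a2 * c1) = 0 := by
      linear_combination (-b3 * c2) * h2 + (b1 * a1 + b2 * a2 + b3 * a3) * k3 + (-b3 * c1) * h1
        + (b1 * c1 + b2 * c2) * h3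
    exact (mul_eq_zero.mp key).resolve_left hS

lemma quat_comm_trans {x y z : ℍ[ℤ]} (hy : ¬(y.imI = 0 ∧ y.imJ = 0 ∧ y.imK = 0))
    (hxy : x * y = y * x) (hyz : y * z = z * y) : x * z = z * x := by
  rw [quat_comm_iff_cross] at hxy hyz ⊢
  exact cross_trans hy hxy.1 hxy.2.1 hxy.2.2 hyz.1 hyz.2.1 hyz.2.2

end QuatLemmas

section ConjLemmas

lemma parallel_pm {a1 a2 a3 b1 b2 b3 N : ℤ} (hb : ¬(b1 = 0 ∧ b2 = 0 ∧ b3 = 0))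
    (h1 : a2 * b3 - a3 * b2 = 0) (h2 : a3 * b1 - a1 * b3 = 0) (h3 : a1 * b2 - a2 * b1 = 0)
    (hn : a1 ^ 2 + a2 ^ 2 + a3 ^ 2 = N ^ 2 * (b1 ^ 2 + b2 ^ 2 + b3 ^ 2)) :
    (a1 = N * b1 ∧ a2 = N * b2 ∧ a3 = N * b3) ∨
      (a1 = -(N * b1) ∧ a2 = -(N * b2) ∧ a3 = -(N * b3)) := by
  set S := b1 ^ 2 + b2 ^ 2 + b3 ^ 2 with hSdef
  have hS : S ≠ 0 := by
    intro h0
    exact hb ⟨by nlinarith [sq_nonneg b1, sq_nonneg b2, sq_nonneg b3],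
      by nlinarith [sq_nonneg b1, sq_nonneg b2, sq_nonneg b3],
      by nlinarith [sq_nonneg b1, sq_nonneg b2, sq_nonneg b3]⟩
  set D := a1 * b1 + a2 * b2 + a3 * b3 with hDdef
  have hD2 : D ^ 2 = N ^ 2 * S ^ 2 := by
    have lag : D ^ 2 = (a1 ^ 2 + a2 ^ 2 + a3 ^ 2) * S
        - ((a2 * b3 - a3 * b2) ^ 2 + (a3 * b1 - a1 * b3) ^ 2 + (a1 * b2 - a2 * b1) ^ 2) := by
      rw [hDdef, hSdef]; ring
    rw [lag, h1, h2, h3, hn]; ring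
  have hcases : D = N * S ∨ D = -(N * S) := by
    have : (D - N * S) * (D + N * S) = 0 := by linear_combination hD2
    rcases mul_eq_zero.mp this with h | h
    · left; linarith
    · right; linarith
  have key1 : S * a1 = D * b1 := by rw [hDdef, hSdef]; linear_combination b2 * h3 - b3 * h2
  have key2 : S * a2 = D * b2 := by rw [hDdef, hSdef]; linear_combination b3 * h1 - b1 * h3
  have key3 : S * a3 = D * b3 := by rw [hDdef, hSdef]; linear_combination b1 * h2 - b2 * h1
  rcases hcases with h | h
  · left
    refine ⟨?_, ?_, ?_⟩ <;> apply mul_left_cancel₀ hS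
    · linear_combination key1 + b1 * h
    · linear_combination key2 + b2 * h
    · linear_combination key3 + b3 * h
  · right
    refine ⟨?_, ?_, ?_⟩ <;> apply mul_left_cancel₀ hS
    · linear_combination key1 + b1 * h
    · linear_combination key2 + b2 * h
    · linear_combination key3 + b3 * h

lemma conj_re (w z : ℍ[ℤ]) : (w * z * star w).re = Quaternion.normSq w * z.re := by
  simp only [Quaternion.re_mul, Quaternion.re_star, Quaternion.imI_star, Quaternion.imJ_star,
    Quaternion.imK_star, Quaternion.normSq_def', Quaternion.imI_mul, Quaternion.imJ_mul,
    Quaternion.imK_mul]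
  ring

lemma quat_conj_comm {w z : ℍ[ℤ]} (hw : w.re ≠ 0) (hz : ¬(z.imI = 0 ∧ z.imJ = 0 ∧ z.imK = 0))
    (h : (w * z * star w) * z = z * (w * z * star w)) : w * z = z * w := by
  set u := w * z * star w with hu
  have hwne : w ≠ 0 := fun h0 => hw (by rw [h0]; rfl)
  have hN : Quaternion.normSq w ≠ 0 := Quaternion.normSq_ne_zero.mpr hwne
  have hNcoe : ((Quaternion.normSq w : ℤ) : ℍ[ℤ]) ≠ 0 := by
    intro h0
    exact hN (Quaternion.coe_injective (h0.trans (by norm_num)))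
  have hure : u.re = Quaternion.normSq w * z.re := conj_re w z
  have hNu : Quaternion.normSq u = Quaternion.normSq w ^ 2 * Quaternion.normSq z := by
    rw [hu, _root_.map_mul Quaternion.normSq, _root_.map_mul Quaternion.normSq,
      Quaternion.normSq_star]
    ring
  have hcross := (quat_comm_iff_cross.mp h)
  have hnorm : u.imI ^ 2 + u.imJ ^ 2 + u.imK ^ 2
      = Quaternion.normSq w ^ 2 * (z.imI ^ 2 + z.imJ ^ 2 + z.imK ^ 2) := by
    have h1 : u.re ^ 2 + u.imI ^ 2 + u.imJ ^ 2 + u.imK ^ 2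
        = Quaternion.normSq w ^ 2 * (z.re ^ 2 + z.imI ^ 2 + z.imJ ^ 2 + z.imK ^ 2) := by
      rw [← Quaternion.normSq_def', ← Quaternion.normSq_def', hNu]
    have h2 : u.re ^ 2 = Quaternion.normSq w ^ 2 * z.re ^ 2 := by rw [hure]; ring
    linear_combination h1 - h2
  have hpar := parallel_pm hz hcross.1 hcross.2.1 hcross.2.2 hnorm
  rcases hpar with hcase | hcase
  · -- u = N * z, so w commutes with z
    have hu_eq : u = ((Quaternion.normSq w : ℤ) : ℍ[ℤ]) * z := by
      ext
      · rw [hure]; simp [Quaternion.re_mul]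
      · simp [Quaternion.imI_mul, hcase.1]
      · simp [Quaternion.imJ_mul, hcase.2.1]
      · simp [Quaternion.imK_mul, hcase.2.2]
    have step : w * z * (star w * w) = ((Quaternion.normSq w : ℤ) : ℍ[ℤ]) * z * w := by
      rw [← mul_assoc, ← hu, hu_eq]
    rw [Quaternion.star_mul_self] at step
    have step2 : ((Quaternion.normSq w : ℤ) : ℍ[ℤ]) * (w * z)
        = ((Quaternion.normSq w : ℤ) : ℍ[ℤ]) * (z * w) := by
      calc ((Quaternion.normSq w : ℤ) : ℍ[ℤ]) * (w * z)
          = (w * z) * ((Quaternion.normSq w : ℤ) : ℍ[ℤ]) := Quaternion.coe_commutes _ _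
      _ = ((Quaternion.normSq w : ℤ) : ℍ[ℤ]) * z * w := step
      _ = ((Quaternion.normSq w : ℤ) : ℍ[ℤ]) * (z * w) := by rw [mul_assoc]
    exact mul_left_cancel₀ hNcoe step2
  · -- u = N * star z : anticommutation, contradiction
    exfalso
    have hu_eq : u = ((Quaternion.normSq w : ℤ) : ℍ[ℤ]) * star z := by
      ext
      · rw [hure]; simp [Quaternion.re_mul]
      · simp [Quaternion.imI_mul, hcase.1]
      · simp [Quaternion.imJ_mul, hcase.2.1]
      · simp [Quaternion.imK_mul, hcase.2.2]
    have step : w * z * (star w * w) = ((Quaternion.normSq w : ℤ) : ℍ[ℤ]) * star z * w := by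
      rw [← mul_assoc, ← hu, hu_eq]
    rw [Quaternion.star_mul_self] at step
    have step2 : ((Quaternion.normSq w : ℤ) : ℍ[ℤ]) * (w * z)
        = ((Quaternion.normSq w : ℤ) : ℍ[ℤ]) * (star z * w) := by
      calc ((Quaternion.normSq w : ℤ) : ℍ[ℤ]) * (w * z)
          = (w * z) * ((Quaternion.normSq w : ℤ) : ℍ[ℤ]) := Quaternion.coe_commutes _ _
      _ = ((Quaternion.normSq w : ℤ) : ℍ[ℤ]) * star z * w := step
      _ = ((Quaternion.normSq w : ℤ) : ℍ[ℤ]) * (star z * w) := by rw [mul_assoc]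
    have hwz : w * z = star z * w := mul_left_cancel₀ hNcoe step2
    -- derive anticommutation of w with the imaginary part of z
    set y : ℍ[ℤ] := z - ((z.re : ℤ) : ℍ[ℤ]) with hy
    have hanti : w * y = -(y * w) := by
      have hstar : star z = ((2 * z.re : ℤ) : ℍ[ℤ]) - z := by
        rw [Quaternion.star_eq_two_re_sub]
        rfl
      rw [hy]
      rw [mul_sub, sub_mul]
      rw [hstar] at hwz
      rw [sub_mul] at hwz
      have hc1 : w * ((z.re : ℤ) : ℍ[ℤ]) = ((z.re : ℤ) : ℍ[ℤ]) * w :=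
        (Quaternion.coe_commutes _ _).symm
      have hc2 : ((2 * z.re : ℤ) : ℍ[ℤ]) = 2 * ((z.re : ℤ) : ℍ[ℤ]) := by push_cast; ring
      rw [hc2] at hwz
      -- hwz : w * z = 2 * re * w - z * w
      have : w * z - ((z.re : ℤ) : ℍ[ℤ]) * w = -(z * w - ((z.re : ℤ) : ℍ[ℤ]) * w) := by
        rw [hwz]; noncomm_ring
      rw [hc1]
      exact this
    have hy0 : y = 0 := quat_anticomm_eq_zero hw hanti
    apply hz
    have hI : z.imI = 0 := by
      have := congrArg QuaternionAlgebra.imI hy0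
      simpa [hy] using this
    have hJ : z.imJ = 0 := by
      have := congrArg QuaternionAlgebra.imJ hy0
      simpa [hy] using this
    have hK : z.imK = 0 := by
      have := congrArg QuaternionAlgebra.imK hy0
      simpa [hy] using this
    exact ⟨hI, hJ, hK⟩

end ConjLemmas

section PsiLemmas
variable (cp dp : ℚ_[p]) (cl dl : ℚ_[l])
  (hp : cp ^ 2 + dp ^ 2 + 1 = 0) (hl : cl ^ 2 + dl ^ 2 + 1 = 0)

lemma psi_mul {x y : ℍ[ℤ]} (hx : x ≠ 0) (hy : y ≠ 0) :
    psi p l cp dp cl dl hp hl (x * y)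
      = psi p l cp dp cl dl hp hl x * psi p l cp dp cl dl hp hl y := by
  have hxy : x * y ≠ 0 := mul_ne_zero hx hy
  have h1 : psiGL cp dp hp (x * y) = psiGL cp dp hp x * psiGL cp dp hp y := by
    apply Units.ext
    rw [Units.val_mul, psiGL_val hp hxy, psiGL_val hp hx, psiGL_val hp hy, Mcd_map_mul hp]
  have h2 : psiGL cl dl hl (x * y) = psiGL cl dl hl x * psiGL cl dl hl y := by
    apply Units.ext
    rw [Units.val_mul, psiGL_val hl hxy, psiGL_val hl hx, psiGL_val hl hy, Mcd_map_mul hl]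
  unfold psi
  rw [h1, h2]
  rfl

lemma psi_one : psi p l cp dp cl dl hp hl 1 = 1 := by
  have h1 : psiGL cp dp hp (1 : ℍ[ℤ]) = 1 := by
    apply Units.ext
    rw [psiGL_val hp one_ne_zero, Mcd_map_one, Units.val_one]
  have h2 : psiGL cl dl hl (1 : ℍ[ℤ]) = 1 := by
    apply Units.ext
    rw [psiGL_val hl one_ne_zero, Mcd_map_one, Units.val_one]
  unfold psi
  rw [h1, h2]
  rfl

lemma psi_coe_eq_one {n : ℤ} (hn : n ≠ 0) : psi p l cp dp cl dl hp hl ((n : ℍ[ℤ])) = 1 := by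
  have hcoe : ((n : ℍ[ℤ])) ≠ 0 := fun h0 => hn (Quaternion.coe_injective (h0.trans (by norm_num)))
  have h1 : (QuotientGroup.mk (psiGL cp dp hp ((n : ℍ[ℤ]))) : PGL2 ℚ_[p]) = QuotientGroup.mk 1 := by
    refine pgl_mk_eq_of_smul (μ := (n : ℚ_[p])⁻¹) ?_ ?_
    · exact inv_ne_zero (by exact_mod_cast hn)
    · rw [Units.val_one, psiGL_val hp hcoe, Mcd_coe, smul_smul,
        inv_mul_cancel₀ (by exact_mod_cast hn : ((n : ℚ_[p])) ≠ 0), one_smul]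
  have h2 : (QuotientGroup.mk (psiGL cl dl hl ((n : ℍ[ℤ]))) : PGL2 ℚ_[l]) = QuotientGroup.mk 1 := by
    refine pgl_mk_eq_of_smul (μ := (n : ℚ_[l])⁻¹) ?_ ?_
    · exact inv_ne_zero (by exact_mod_cast hn)
    · rw [Units.val_one, psiGL_val hl hcoe, Mcd_coe, smul_smul,
        inv_mul_cancel₀ (by exact_mod_cast hn : ((n : ℚ_[l])) ≠ 0), one_smul]
  unfold psi
  rw [Prod.ext_iff]
  exact ⟨h1.symm ▸ rfl, h2.symm ▸ rfl⟩

lemma psi_inv {x : ℍ[ℤ]} (hx : x ≠ 0) :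
    (psi p l cp dp cl dl hp hl x)⁻¹ = psi p l cp dp cl dl hp hl (star x) := by
  have hsx : star x ≠ 0 := star_ne_zero.mpr hx
  have hN : Quaternion.normSq x ≠ 0 := Quaternion.normSq_ne_zero.mpr hx
  have hmul : psi p l cp dp cl dl hp hl x * psi p l cp dp cl dl hp hl (star x) = 1 := by
    rw [← psi_mul p l cp dp cl dl hp hl hx hsx, Quaternion.self_mul_star]
    exact psi_coe_eq_one p l cp dp cl dl hp hl hN
  exact inv_eq_of_mul_eq_one_right hmul

lemma psi_comm_of_comm {x y : ℍ[ℤ]} (hx : x ≠ 0) (hy : y ≠ 0) (h : x * y = y * x) :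
    psi p l cp dp cl dl hp hl x * psi p l cp dp cl dl hp hl y
      = psi p l cp dp cl dl hp hl y * psi p l cp dp cl dl hp hl x := by
  rw [← psi_mul p l cp dp cl dl hp hl hx hy, ← psi_mul p l cp dp cl dl hp hl hy hx, h]

lemma psi_comm_dichotomy {x y : ℍ[ℤ]} (hx : x ≠ 0) (hy : y ≠ 0)
    (h : psi p l cp dp cl dl hp hl x * psi p l cp dp cl dl hp hl y
      = psi p l cp dp cl dl hp hl y * psi p l cp dp cl dl hp hl x) :
    x * y = y * x ∨ x * y = -(y * x) := by
  have hxy : x * y ≠ 0 := mul_ne_zero hx hy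
  have hyx : y * x ≠ 0 := mul_ne_zero hy hx
  have h1 : (QuotientGroup.mk (psiGL cp dp hp x * psiGL cp dp hp y) : PGL2 ℚ_[p])
      = QuotientGroup.mk (psiGL cp dp hp y * psiGL cp dp hp x) := congrArg Prod.fst h
  obtain ⟨μ, hμ, hsmul⟩ := pgl_mk_eq_imp h1
  have hval : Mcd cp dp (y * x) = μ • Mcd cp dp (x * y) := by
    rw [Mcd_map_mul hp y x, Mcd_map_mul hp x y]
    calc Mcd cp dp y * Mcd cp dp x
        = ((psiGL cp dp hp y * psiGL cp dp hp x : GL (Fin 2) ℚ_[p]) : Matrix (Fin 2) (Fin 2) ℚ_[p]) := by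
          rw [Units.val_mul, psiGL_val hp hy, psiGL_val hp hx]
    _ = μ • ((psiGL cp dp hp x * psiGL cp dp hp y : GL (Fin 2) ℚ_[p]) : Matrix (Fin 2) (Fin 2) ℚ_[p]) := hsmul
    _ = μ • (Mcd cp dp x * Mcd cp dp y) := by rw [Units.val_mul, psiGL_val hp hx, psiGL_val hp hy]
  have hdet : ((Quaternion.normSq (y * x) : ℤ) : ℚ_[p]) = μ ^ 2 * ((Quaternion.normSq (x * y) : ℤ) : ℚ_[p]) := by
    have := congrArg Matrix.det hval
    rwa [det_Mcd hp, Matrix.det_smul, det_Mcd hp, Fintype.card_fin] at this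
  have hNeq : Quaternion.normSq (y * x) = Quaternion.normSq (x * y) := by
    rw [_root_.map_mul Quaternion.normSq, _root_.map_mul Quaternion.normSq]; ring
  have hNne : ((Quaternion.normSq (x * y) : ℤ) : ℚ_[p]) ≠ 0 := by
    exact_mod_cast Quaternion.normSq_ne_zero.mpr hxy
  have hμ2 : μ ^ 2 = 1 := by
    rw [hNeq] at hdet
    have h' : (μ ^ 2 - 1) * ((Quaternion.normSq (x * y) : ℤ) : ℚ_[p]) = 0 := by
      linear_combination -hdet
    rcases mul_eq_zero.mp h' with h'' | h''
    · linear_combination h''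
    · exact absurd h'' hNne
  have hμcases : μ = 1 ∨ μ = -1 := by
    have : (μ - 1) * (μ + 1) = 0 := by linear_combination hμ2
    rcases mul_eq_zero.mp this with h' | h'
    · left; linear_combination h'
    · right; linear_combination h'
  rcases hμcases with rfl | rfl
  · left
    exact (Mcd_inj hp (by rw [hval, one_smul])).symm
  · right
    have : Mcd cp dp (y * x) = Mcd cp dp (-(x * y)) := by
      rw [hval, Mcd_map_neg]
      module
    have := Mcd_inj hp this
    rw [this]
    simp
end PsiLemmas

lemma closure_comm {G : Type*} [Group G] {S : Set G}
    (h : ∀ a ∈ S, ∀ b ∈ S, a * b = b * a) :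
    ∀ a ∈ Subgroup.closure S, ∀ b ∈ Subgroup.closure S, a * b = b * a := by
  have step1 : Subgroup.closure S ≤ Subgroup.centralizer S := by
    rw [Subgroup.closure_le]
    intro a ha
    rw [SetLike.mem_coe, Subgroup.mem_centralizer_iff]
    intro b hb
    exact h b hb a ha
  intro a ha b hb
  have hA : ∀ s ∈ S, s * a = a * s := Subgroup.mem_centralizer_iff.mp (step1 ha)
  have step2 : Subgroup.closure S ≤ Subgroup.centralizer {a} := by
    rw [Subgroup.closure_le]
    intro s hs
    rw [SetLike.mem_coe, Subgroup.mem_centralizer_iff]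
    intro c hc
    rw [Set.mem_singleton_iff] at hc
    subst hc
    exact (hA s hs).symm
  exact Subgroup.mem_centralizer_iff.mp (step2 hb) a rfl

section GammaLemmas
variable (cp dp : ℚ_[p]) (cl dl : ℚ_[l])
  (hp : cp ^ 2 + dp ^ 2 + 1 = 0) (hl : cl ^ 2 + dl ^ 2 + 1 = 0)

lemma gamma_rep (hpo : Odd p) (hlo : Odd l) {γ : PGL2 ℚ_[p] × PGL2 ℚ_[l]}
    (hγ : γ ∈ Gamma p l cp dp cl dl hp hl) :
    ∃ x ∈ GammaTilde p l, psi p l cp dp cl dl hp hl x = γ := by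
  induction hγ using Subgroup.closure_induction with
  | mem γ' hγ' => obtain ⟨x, hx, rfl⟩ := hγ'; exact ⟨x, hx, rfl⟩
  | one => exact ⟨1, gammaTilde_one_mem hpo hlo, psi_one p l cp dp cl dl hp hl⟩
  | mul γ1 γ2 h1 h2 ih1 ih2 =>
      obtain ⟨x, hx, rfl⟩ := ih1
      obtain ⟨y, hy, rfl⟩ := ih2
      exact ⟨x * y, gammaTilde_mul_mem hpo hlo hx hy,
        psi_mul p l cp dp cl dl hp hl (gammaTilde_ne_zero hpo hlo hx)
          (gammaTilde_ne_zero hpo hlo hy)⟩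
  | inv γ1 h1 ih1 =>
      obtain ⟨x, hx, rfl⟩ := ih1
      exact ⟨star x, gammaTilde_star_mem hpo hlo hx,
        (psi_inv p l cp dp cl dl hp hl (gammaTilde_ne_zero hpo hlo hx)).symm⟩

lemma psi_ne_one_nonreal (hpo : Odd p) (hlo : Odd l) {x : ℍ[ℤ]} (hx : x ∈ GammaTilde p l)
    (h1 : psi p l cp dp cl dl hp hl x ≠ 1) : ¬(x.imI = 0 ∧ x.imJ = 0 ∧ x.imK = 0) := by
  rintro ⟨hI, hJ, hK⟩
  apply h1
  have hxc : x = ((x.re : ℤ) : ℍ[ℤ]) := by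
    ext <;> simp [hI, hJ, hK]
  rw [hxc]
  exact psi_coe_eq_one p l cp dp cl dl hp hl (gammaTilde_re_ne_zero hpo hlo hx)

lemma gamma_CT (hpo : Odd p) (hlo : Odd l) {a b m : PGL2 ℚ_[p] × PGL2 ℚ_[l]}
    (ha : a ∈ Gamma p l cp dp cl dl hp hl) (hb : b ∈ Gamma p l cp dp cl dl hp hl)
    (hm : m ∈ Gamma p l cp dp cl dl hp hl) (hm1 : m ≠ 1)
    (h1 : a * m = m * a) (h2 : m * b = b * m) : a * b = b * a := by
  obtain ⟨xa, hxa, rfl⟩ := gamma_rep p l cp dp cl dl hp hl hpo hlo ha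
  obtain ⟨xb, hxb, rfl⟩ := gamma_rep p l cp dp cl dl hp hl hpo hlo hb
  obtain ⟨xm, hxm, rfl⟩ := gamma_rep p l cp dp cl dl hp hl hpo hlo hm
  have hane : xa ≠ 0 := gammaTilde_ne_zero hpo hlo hxa
  have hbne : xb ≠ 0 := gammaTilde_ne_zero hpo hlo hxb
  have hmne : xm ≠ 0 := gammaTilde_ne_zero hpo hlo hxm
  have hare : xa.re ≠ 0 := gammaTilde_re_ne_zero hpo hlo hxa
  have hmre : xm.re ≠ 0 := gammaTilde_re_ne_zero hpo hlo hxm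
  have hmnr := psi_ne_one_nonreal p l cp dp cl dl hp hl hpo hlo hxm hm1
  have c1 : xa * xm = xm * xa := by
    rcases psi_comm_dichotomy p l cp dp cl dl hp hl hane hmne h1 with h | h
    · exact h
    · exact absurd (quat_anticomm_eq_zero hare h) hmne
  have c2 : xm * xb = xb * xm := by
    rcases psi_comm_dichotomy p l cp dp cl dl hp hl hmne hbne h2 with h | h
    · exact h
    · exact absurd (quat_anticomm_eq_zero hmre h) hbne
  exact psi_comm_of_comm p l cp dp cl dl hp hl hane hbne
    (quat_comm_trans hmnr c1 c2)

end GammaLemmas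

set_option maxHeartbeats 1000000

/-- Proposition 3: `Γ` is a CSA-group, i.e. every maximal abelian subgroup `Γ₀` of `Γ`
is malnormal: `gΓ₀g⁻¹ ∩ Γ₀ = {1}` for every `g ∈ Γ - Γ₀`. -/
theorem gamma_CSA (p l : ℕ) [Fact p.Prime] [Fact l.Prime]
    (hp2 : p ≠ 2) (hl2 : l ≠ 2) (hpl : p ≠ l)
    (cp dp : ℚ_[p]) (cl dl : ℚ_[l])
    (hcp : cp ^ 2 + dp ^ 2 + 1 = 0) (hcl : cl ^ 2 + dl ^ 2 + 1 = 0)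
    (Γ₀ : Subgroup (PGL2 ℚ_[p] × PGL2 ℚ_[l]))
    (hmax : IsMaxAbelian (Gamma p l cp dp cl dl hcp hcl) Γ₀)
    (g : PGL2 ℚ_[p] × PGL2 ℚ_[l]) (hg : g ∈ Gamma p l cp dp cl dl hcp hcl) (hgn : g ∉ Γ₀) :
    Subgroup.map (MulAut.conj g).toMonoidHom Γ₀ ⊓ Γ₀ = ⊥ := by
  classical
  have hpo : Odd p := (Fact.out : p.Prime).odd_of_ne_two hp2
  have hlo : Odd l := (Fact.out : l.Prime).odd_of_ne_two hl2
  obtain ⟨hΓle, habel, hmaxi⟩ := hmax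
  by_contra hne
  obtain ⟨t, htK, ht1⟩ := (Subgroup.bot_or_exists_ne_one _).resolve_left hne
  set Γ := Gamma p l cp dp cl dl hcp hcl with hΓ
  set C := Subgroup.map (MulAut.conj g).toMonoidHom Γ₀ with hCdef
  have htC : t ∈ C := (Subgroup.mem_inf.mp htK).1
  have htΓ₀ : t ∈ Γ₀ := (Subgroup.mem_inf.mp htK).2
  have hconj_mem : ∀ {c}, c ∈ C → ∃ s ∈ Γ₀, g * s * g⁻¹ = c := by
    intro c hc
    obtain ⟨s, hs, rfl⟩ := Subgroup.mem_map.mp hc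
    exact ⟨s, hs, rfl⟩
  have hconj_mem' : ∀ {s}, s ∈ Γ₀ → g * s * g⁻¹ ∈ C := by
    intro s hs
    exact Subgroup.mem_map.mpr ⟨s, hs, rfl⟩
  have hkey : ∀ u v : PGL2 ℚ_[p] × PGL2 ℚ_[l],
      (g * u * g⁻¹) * (g * v * g⁻¹) = g * (u * v) * g⁻¹ := by
    intro u v; group
  have hCle : C ≤ Γ := by
    intro c hc
    obtain ⟨s, hs, rfl⟩ := hconj_mem hc
    exact mul_mem (mul_mem hg (hΓle hs)) (inv_mem hg)
  have hCab : ∀ c1 ∈ C, ∀ c2 ∈ C, c1 * c2 = c2 * c1 := by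
    intro c1 hc1 c2 hc2
    obtain ⟨s1, hs1, rfl⟩ := hconj_mem hc1
    obtain ⟨s2, hs2, rfl⟩ := hconj_mem hc2
    rw [hkey, hkey, habel s1 hs1 s2 hs2]
  -- all elements of Γ₀ commute with all elements of C
  have hmix : ∀ a ∈ Γ₀, ∀ c ∈ C, a * c = c * a := by
    intro a ha c hc
    exact gamma_CT p l cp dp cl dl hcp hcl hpo hlo (hΓle ha) (hCle hc) (hΓle htΓ₀) ht1
      (habel a ha t htΓ₀) (hCab t htC c hc)
  -- the subgroup generated by Γ₀ ∪ C is abelian, hence equals Γ₀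
  set U : Set (PGL2 ℚ_[p] × PGL2 ℚ_[l]) := ↑Γ₀ ∪ ↑C with hU
  have hUcomm : ∀ a ∈ U, ∀ b ∈ U, a * b = b * a := by
    rintro a (ha | ha) b (hb | hb)
    · exact habel a ha b hb
    · exact hmix a ha b hb
    · exact (hmix b hb a ha).symm
    · exact hCab a ha b hb
  have hHle : Subgroup.closure U ≤ Γ := by
    rw [Subgroup.closure_le]
    rintro a (ha | ha)
    · exact hΓle ha
    · exact hCle ha
  have hHeq : Subgroup.closure U = Γ₀ := by
    refine hmaxi _ hHle (closure_comm hUcomm) ?_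
    intro a ha
    exact Subgroup.subset_closure (Or.inl ha)
  have hCsub : C ≤ Γ₀ := by
    intro c hc
    rw [← hHeq]
    exact Subgroup.subset_closure (Or.inr hc)
  -- now g * t * g⁻¹ ∈ Γ₀ commutes with t
  have hgtg : g * t * g⁻¹ ∈ Γ₀ := hCsub (hconj_mem' htΓ₀)
  have hcomm : (g * t * g⁻¹) * t = t * (g * t * g⁻¹) := habel _ hgtg t htΓ₀
  -- representatives
  obtain ⟨w, hwmem, hgw⟩ := gamma_rep p l cp dp cl dl hcp hcl hpo hlo hg
  obtain ⟨z, hzmem, hzt⟩ := gamma_rep p l cp dp cl dl hcp hcl hpo hlo (hΓle htΓ₀)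
  have hwne : w ≠ 0 := gammaTilde_ne_zero hpo hlo hwmem
  have hzne : z ≠ 0 := gammaTilde_ne_zero hpo hlo hzmem
  have hwre : w.re ≠ 0 := gammaTilde_re_ne_zero hpo hlo hwmem
  have hzre : z.re ≠ 0 := gammaTilde_re_ne_zero hpo hlo hzmem
  have hswne : star w ≠ 0 := star_ne_zero.mpr hwne
  have hznr : ¬(z.imI = 0 ∧ z.imJ = 0 ∧ z.imK = 0) :=
    psi_ne_one_nonreal p l cp dp cl dl hcp hcl hpo hlo hzmem (by rw [hzt]; exact ht1)
  have hconj_psi : g * t * g⁻¹ = psi p l cp dp cl dl hcp hcl (w * z * star w) := by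
    rw [← hgw, ← hzt]
    rw [psi_mul p l cp dp cl dl hcp hcl (mul_ne_zero hwne hzne) hswne,
      psi_mul p l cp dp cl dl hcp hcl hwne hzne]
    rw [psi_inv p l cp dp cl dl hcp hcl hwne]
  have hune : w * z * star w ≠ 0 := mul_ne_zero (mul_ne_zero hwne hzne) hswne
  have hure : (w * z * star w).re ≠ 0 := by
    rw [conj_re]
    exact mul_ne_zero (Quaternion.normSq_ne_zero.mpr hwne) hzre
  have hpsi_comm : psi p l cp dp cl dl hcp hcl (w * z * star w) * psi p l cp dp cl dl hcp hcl z
      = psi p l cp dp cl dl hcp hcl z * psi p l cp dp cl dl hcp hcl (w * z * star w) := by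
    rw [← hconj_psi, hzt]
    exact hcomm
  have huz : (w * z * star w) * z = z * (w * z * star w) := by
    rcases psi_comm_dichotomy p l cp dp cl dl hcp hcl hune hzne hpsi_comm with h | h
    · exact h
    · exact absurd (quat_anticomm_eq_zero hure h) hzne
  have hwz : w * z = z * w := quat_conj_comm hwre hznr huz
  have hgt : g * t = t * g := by
    rw [← hgw, ← hzt]
    exact psi_comm_of_comm p l cp dp cl dl hcp hcl hwne hzne hwz
  -- g commutes with everything in Γ₀
  have hgall : ∀ a ∈ Γ₀, g * a = a * g := by
    intro a ha
    exact gamma_CT p l cp dp cl dl hcp hcl hpo hlo hg (hΓle ha) (hΓle htΓ₀) ht1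
      hgt (habel t htΓ₀ a ha)
  -- the subgroup generated by Γ₀ ∪ {g} is abelian, hence equals Γ₀, so g ∈ Γ₀
  set V : Set (PGL2 ℚ_[p] × PGL2 ℚ_[l]) := ↑Γ₀ ∪ {g} with hV
  have hVcomm : ∀ a ∈ V, ∀ b ∈ V, a * b = b * a := by
    rintro a (ha | ha) b (hb | hb)
    · exact habel a ha b hb
    · rw [Set.mem_singleton_iff] at hb; subst hb
      exact (hgall a ha).symm
    · rw [Set.mem_singleton_iff] at ha; subst ha
      exact hgall b hb
    · rw [Set.mem_singleton_iff] at ha hb; subst ha; subst hb; rfl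
  have hVle : Subgroup.closure V ≤ Γ := by
    rw [Subgroup.closure_le]
    rintro a (ha | ha)
    · exact hΓle ha
    · rw [Set.mem_singleton_iff] at ha; subst ha; exact hg
  have hVeq : Subgroup.closure V = Γ₀ := by
    refine hmaxi _ hVle (closure_comm hVcomm) ?_
    intro a ha
    exact Subgroup.subset_closure (Or.inl ha)
  apply hgn
  rw [← hVeq]
  exact Subgroup.subset_closure (Or.inr rfl)
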